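/- arXiv:2603.21492 — 2 statements merged into one kernel-verified Lean document; each statement's English description precedes it below -/
import Mathlib

section
/- If the set function f : 2^V → ℝ≥0 is monotone, α-weakly DR-submodular for some α ∈ (0,1], and satisfies f(∅) = 0, then for every point x = (p_1,…,p_K) ∈ ∏_{k=1}^K Δ_{n_k} and every feasible subset S ⊆ V, one has ⟨ Σ_{k=1}^K (1/B_k)·1_{S∩V_k} − x, ∫_0^1 e^{α(z−1)} ∇F(z·x) dz ⟩ ≥ (1 − e^{−α})·f(S) − F(x). -/
open Finset

noncomputable section

namespace Multinoulli

variable {K : ℕ}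

/-- An element of the ground set `V`: a community index `k` together with the
index `m` of the element `v_k^m` inside its community `V_k`. -/
abbrev Elem (n : Fin K → ℕ) := Σ k : Fin K, Fin (n k)

/-- A sampling slot: a community `k` together with a trial index `b ∈ {1,…,B_k}`. -/
abbrev Slot (B : Fin K → ℕ) := Σ k : Fin K, Fin (B k)

/-- A joint outcome of all the independent multinoulli trials; `none` encodes a
draw of `∅`, which contributes no element. -/
abbrev Choice (n B : Fin K → ℕ) := ∀ s : Slot B, Option (Fin (n s.1))

/-- The probability that `Multi(p_k)` (the `k`-th block of `x`) assigns to a given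
outcome: `x ⟨k,m⟩` for the element `v_k^m` and `1 - Σ_m x ⟨k,m⟩` for `∅`. -/
def prob (n : Fin K → ℕ) (x : Elem n → ℝ) (k : Fin K) : Option (Fin (n k)) → ℝ
  | some m => x ⟨k, m⟩
  | none => 1 - ∑ m : Fin (n k), x ⟨k, m⟩

/-- The probability of the joint outcome `e` (all trials are mutually independent). -/
def jointProb (n B : Fin K → ℕ) (x : Elem n → ℝ) (e : Choice n B) : ℝ :=
  ∏ s : Slot B, prob n x s.1 (e s)

/-- The subset of the ground set selected by the trials whose slot lies in `A`
(a draw of `∅` contributes no element to the union). -/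
def chosen (n B : Fin K → ℕ) (e : Choice n B) (A : Finset (Slot B)) : Finset (Elem n) :=
  A.biUnion fun s => ((e s).map fun m => (⟨s.1, m⟩ : Elem n)).toFinset

/-- The Multinoulli Extension `F` of the set function `f`:
`F(x) = E[f(∪_{k,b} {e_k^b})]` for mutually independent `e_k^b ∼ Multi(p_k)`. -/
def ME (n B : Fin K → ℕ) (f : Finset (Elem n) → ℝ) (x : Elem n → ℝ) : ℝ :=
  ∑ e : Choice n B, f (chosen n B e Finset.univ) * jointProb n B x e

/-- The first-order partial derivative `∂G/∂x_i` at `x`. -/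
def pderiv (n : Fin K → ℕ) (G : (Elem n → ℝ) → ℝ) (i : Elem n) (x : Elem n → ℝ) : ℝ :=
  deriv (fun t => G (Function.update x i t)) (x i)

/-- The gradient `∇G(x)`. -/
def grad (n : Fin K → ℕ) (G : (Elem n → ℝ) → ℝ) (x : Elem n → ℝ) : Elem n → ℝ :=
  fun i => pderiv n G i x

/-- The second-order partial derivative `∂²G/∂x_i∂x_j` at `x`. -/
def pderiv2 (n : Fin K → ℕ) (G : (Elem n → ℝ) → ℝ) (i j : Elem n) (x : Elem n → ℝ) : ℝ :=
  pderiv n (fun y => pderiv n G j y) i x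

/-- The Euclidean inner product on `∏_k ℝ^{n_k}`. -/
def inner' (n : Fin K → ℕ) (u v : Elem n → ℝ) : ℝ := ∑ i : Elem n, u i * v i

/-- Membership in the product of simplices `∏_{k=1}^K Δ_{n_k}`. -/
def InSimplex (n : Fin K → ℕ) (x : Elem n → ℝ) : Prop :=
  (∀ i, 0 ≤ x i) ∧ ∀ k : Fin K, ∑ m : Fin (n k), x ⟨k, m⟩ ≤ 1

/-- Feasibility for the partition constraint: `|S ∩ V_k| ≤ B_k` for all `k`. -/
def Feasible (n B : Fin K → ℕ) (S : Finset (Elem n)) : Prop :=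
  ∀ k : Fin K, (S.filter fun i => i.1 = k).card ≤ B k

/-- Monotonicity of a set function. -/
def MonotoneSet (n : Fin K → ℕ) (f : Finset (Elem n) → ℝ) : Prop :=
  ∀ A B : Finset (Elem n), A ⊆ B → f A ≤ f B

/-- The marginal contribution `f(v|A) = f(A ∪ {v}) - f(A)`. -/
def marg (n : Fin K → ℕ) (f : Finset (Elem n) → ℝ) (v : Elem n) (A : Finset (Elem n)) : ℝ :=
  f (insert v A) - f A

/-- `α`-weak DR-submodularity: `f(v|A) ≥ α·f(v|B)` for all `A ⊆ B` and `v ∉ B`. -/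
def WeaklyDR (n : Fin K → ℕ) (f : Finset (Elem n) → ℝ) (α : ℝ) : Prop :=
  ∀ A B : Finset (Elem n), A ⊆ B → ∀ v, v ∉ B → α * marg n f v B ≤ marg n f v A

/-- `γ`-weak submodularity from below. -/
def WeaklyBelow (n : Fin K → ℕ) (f : Finset (Elem n) → ℝ) (γ : ℝ) : Prop :=
  ∀ A B : Finset (Elem n), A ⊆ B → γ * (f B - f A) ≤ ∑ v ∈ B \ A, marg n f v A

/-- `β`-weak submodularity from above. -/
def WeaklyAbove (n : Fin K → ℕ) (f : Finset (Elem n) → ℝ) (β : ℝ) : Prop :=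
  ∀ A B : Finset (Elem n), A ⊆ B → ∑ v ∈ B \ A, marg n f v (B.erase v) ≤ β * (f B - f A)

/-- The scaled indicator vector `Σ_{k=1}^K (1/B_k)·1_{S∩V_k}`. -/
def indVec (n B : Fin K → ℕ) (S : Finset (Elem n)) : Elem n → ℝ :=
  fun i => if i ∈ S then ((B i.1 : ℝ))⁻¹ else 0


/-- The (coordinatewise) auxiliary integral `∫_0^1 w(z)·∇F(z·x) dz`, where `z·x`
denotes coordinatewise scaling of `x` by `z`. -/
def auxGrad (n B : Fin K → ℕ) (f : Finset (Elem n) → ℝ) (w : ℝ → ℝ) (x : Elem n → ℝ) :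
    Elem n → ℝ :=
  fun i => ∫ z in (0:ℝ)..1, w z * grad n (ME n B f) (fun j => z * x j) i

section Aux

variable {K : ℕ} {n B : Fin K → ℕ}

/-- Derivative of `prob n · k o` in the coordinate `i`. -/
def slope (n : Fin K → ℕ) (i : Elem n) (k : Fin K) : Option (Fin (n k)) → ℝ
  | some m => if (⟨k, m⟩ : Elem n) = i then 1 else 0
  | none => if i.1 = k then -1 else 0

lemma sum_slope_some (i : Elem n) (k : Fin K) :
    ∑ m : Fin (n k), (if (⟨k, m⟩ : Elem n) = i then (1:ℝ) else 0) =
      if i.1 = k then 1 else 0 := by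
  rcases eq_or_ne i.1 k with h | h
  · obtain ⟨k', m'⟩ := i
    dsimp only at h
    subst h
    simp
  · rw [if_neg h, Finset.sum_eq_zero]
    intro m _
    rw [if_neg]
    rintro rfl
    exact h rfl

lemma prob_hasDerivAt (y : Elem n → ℝ) (i : Elem n) (k : Fin K) (o : Option (Fin (n k))) :
    HasDerivAt (fun t => prob n (Function.update y i t) k o) (slope n i k o) (y i) := by
  cases o with
  | some m =>
      simp only [prob, slope, Function.update_apply]
      by_cases h : (⟨k, m⟩ : Elem n) = i
      · simpa [h] using hasDerivAt_id' (y i)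
      · simpa [h] using hasDerivAt_const (y i) (y ⟨k, m⟩)
  | none =>
      simp only [prob, slope]
      have h1 : ∀ m : Fin (n k), HasDerivAt
          (fun t => Function.update y i t ⟨k, m⟩)
          (if (⟨k, m⟩ : Elem n) = i then (1:ℝ) else 0) (y i) := by
        intro m
        simp only [Function.update_apply]
        by_cases h : (⟨k, m⟩ : Elem n) = i
        · simpa [h] using hasDerivAt_id' (y i)
        · simpa [h] using hasDerivAt_const (y i) (y ⟨k, m⟩)
      have hsum := HasDerivAt.fun_sum (u := Finset.univ) (fun m _ => h1 m)
      rw [sum_slope_some] at hsum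
      have h2 := hsum.const_sub 1
      have h3 : (-if i.1 = k then (1:ℝ) else 0) = (if i.1 = k then -1 else 0) := by
        split_ifs <;> norm_num
      rw [h3] at h2
      exact h2

/-- Explicit formula for the gradient of the multinoulli extension. -/
def Dgrad (n B : Fin K → ℕ) (f : Finset (Elem n) → ℝ) (i : Elem n) (y : Elem n → ℝ) : ℝ :=
  ∑ e : Choice n B, f (chosen n B e Finset.univ) *
    ∑ s : Slot B, slope n i s.1 (e s) *
      ∏ s' ∈ Finset.univ.erase s, prob n y s'.1 (e s')

lemma jointProb_hasDerivAt (y : Elem n → ℝ) (i : Elem n) (e : Choice n B) :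
    HasDerivAt (fun t => jointProb n B (Function.update y i t) e)
      (∑ s : Slot B, slope n i s.1 (e s) *
        ∏ s' ∈ Finset.univ.erase s, prob n y s'.1 (e s')) (y i) := by
  have h := HasDerivAt.fun_finsetProd
    (u := (Finset.univ : Finset (Slot B)))
    (f := fun s t => prob n (Function.update y i t) s.1 (e s))
    (f' := fun s => slope n i s.1 (e s))
    (fun s _ => prob_hasDerivAt y i s.1 (e s))
  simp only [smul_eq_mul, Function.update_self] at h
  have heq : ∀ s' : Slot B, prob n (Function.update y i (y i)) s'.1 (e s') =
      prob n y s'.1 (e s') := by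
    intro s'; rw [Function.update_eq_self]
  simp only [heq] at h
  have hc : (∑ s : Slot B, slope n i s.1 (e s) *
      ∏ s' ∈ Finset.univ.erase s, prob n y s'.1 (e s')) =
      ∑ s : Slot B, (∏ s' ∈ Finset.univ.erase s, prob n y s'.1 (e s')) *
        slope n i s.1 (e s) := Finset.sum_congr rfl fun s _ => mul_comm _ _
  rw [hc]
  exact h

lemma ME_hasDerivAt (f : Finset (Elem n) → ℝ) (y : Elem n → ℝ) (i : Elem n) :
    HasDerivAt (fun t => ME n B f (Function.update y i t)) (Dgrad n B f i y) (y i) :=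
  HasDerivAt.fun_sum fun e _ => (jointProb_hasDerivAt y i e).const_mul _

lemma grad_ME (f : Finset (Elem n) → ℝ) (y : Elem n → ℝ) (i : Elem n) :
    grad n (ME n B f) y i = Dgrad n B f i y :=
  (ME_hasDerivAt f y i).deriv

end Aux

section Aux2

variable {K : ℕ} {n B : Fin K → ℕ}

lemma sum_prob (y : Elem n → ℝ) (k : Fin K) :
    ∑ o : Option (Fin (n k)), prob n y k o = 1 := by
  rw [Fintype.sum_option]
  simp [prob]

lemma sum_jointProb (y : Elem n → ℝ) :
    ∑ e : Choice n B, jointProb n B y e = 1 := by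
  calc ∑ e : Choice n B, jointProb n B y e
      = ∑ e ∈ Fintype.piFinset
          (fun s : Slot B => (Finset.univ : Finset (Option (Fin (n s.1))))),
          ∏ s : Slot B, prob n y s.1 (e s) := by
        rw [Fintype.piFinset_univ]; rfl
    _ = ∏ s : Slot B, ∑ o ∈ Finset.univ, prob n y s.1 o :=
        (Finset.prod_univ_sum _ _).symm
    _ = 1 := by
        rw [Finset.prod_eq_one]
        intro s _
        exact sum_prob y s.1

lemma sum_fiber_eq (s : Slot B) (o : Option (Fin (n s.1))) (G : Choice n B → ℝ)
    (hG : ∀ e o', G (Function.update e s o') = G e) :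
    (∑ e : Choice n B, if e s = o then G e else 0) =
      ∑ e : Choice n B, if e s = none then G e else 0 := by
  rw [← Finset.sum_filter, ← Finset.sum_filter]
  refine Finset.sum_bij' (fun e _ => Function.update e s none)
    (fun e _ => Function.update e s o) ?_ ?_ ?_ ?_ ?_
  · intro e he
    simp
  · intro e he
    simp
  · intro e he
    simp only [Finset.mem_filter, Finset.mem_univ, true_and] at he
    show Function.update (Function.update e s none) s o = e
    rw [Function.update_idem, ← he, Function.update_eq_self]
  · intro e he
    simp only [Finset.mem_filter, Finset.mem_univ, true_and] at he
    show Function.update (Function.update e s o) s none = e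
    rw [Function.update_idem, ← he, Function.update_eq_self]
  · intro e he
    exact (hG e none).symm

lemma sum_indep (s : Slot B) (φ : Option (Fin (n s.1)) → ℝ) (G : Choice n B → ℝ)
    (hG : ∀ e o', G (Function.update e s o') = G e) :
    ∑ e : Choice n B, φ (e s) * G e =
      (∑ o : Option (Fin (n s.1)), φ o) *
        ∑ e : Choice n B, if e s = none then G e else 0 := by
  have step1 : ∀ e : Choice n B, φ (e s) * G e =
      ∑ o : Option (Fin (n s.1)), if e s = o then φ o * G e else 0 := by
    intro e
    rw [Finset.sum_ite_eq]
    simp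
  calc ∑ e : Choice n B, φ (e s) * G e
      = ∑ e : Choice n B, ∑ o : Option (Fin (n s.1)),
          if e s = o then φ o * G e else 0 := Finset.sum_congr rfl fun e _ => step1 e
    _ = ∑ o : Option (Fin (n s.1)), ∑ e : Choice n B,
          if e s = o then φ o * G e else 0 := Finset.sum_comm
    _ = ∑ o : Option (Fin (n s.1)), φ o *
          ∑ e : Choice n B, if e s = none then G e else 0 := by
        refine Finset.sum_congr rfl fun o _ => ?_
        rw [← sum_fiber_eq s o G hG, Finset.mul_sum]
        refine Finset.sum_congr rfl fun e _ => ?_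
        split_ifs <;> simp
    _ = _ := by rw [← Finset.sum_mul]

end Aux2

section Aux3

variable {K : ℕ} {n B : Fin K → ℕ}

lemma chosen_update (e : Choice n B) (s : Slot B) (o : Option (Fin (n s.1)))
    (A : Finset (Slot B)) (hs : s ∉ A) :
    chosen n B (Function.update e s o) A = chosen n B e A := by
  unfold chosen
  refine Finset.biUnion_congr rfl fun s' hs' => ?_
  have hne : s' ≠ s := fun h => hs (by rw [← h]; exact hs')
  rw [Function.update_of_ne hne]

lemma prod_erase_update (y : Elem n → ℝ) (e : Choice n B) (s : Slot B)
    (o : Option (Fin (n s.1))) :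
    ∏ s' ∈ Finset.univ.erase s, prob n y s'.1 (Function.update e s o s') =
      ∏ s' ∈ Finset.univ.erase s, prob n y s'.1 (e s') :=
  Finset.prod_congr rfl fun s' hs' => by
    rw [Function.update_of_ne (Finset.ne_of_mem_erase hs')]

lemma chosen_univ_eq (e : Choice n B) (s : Slot B) :
    chosen n B e Finset.univ =
      ((e s).map fun m => (⟨s.1, m⟩ : Elem n)).toFinset ∪
        chosen n B e (Finset.univ.erase s) := by
  unfold chosen
  conv_lhs => rw [← Finset.insert_erase (Finset.mem_univ s)]
  rw [Finset.biUnion_insert]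

lemma chosen_mono (e : Choice n B) {A A' : Finset (Slot B)} (h : A ⊆ A') :
    chosen n B e A ⊆ chosen n B e A' :=
  Finset.biUnion_subset_biUnion_of_subset_left _ h

lemma sum_max_slope (i : Elem n) (s : Slot B) :
    ∑ o : Option (Fin (n s.1)), max (slope n i s.1 o) 0 =
      if i.1 = s.1 then 1 else 0 := by
  rw [Fintype.sum_option]
  have h1 : max (slope n i s.1 none) 0 = 0 := by
    simp only [slope]; split_ifs <;> norm_num
  have h2 : ∀ m : Fin (n s.1), max (slope n i s.1 (some m)) 0 =
      if (⟨s.1, m⟩ : Elem n) = i then (1:ℝ) else 0 := by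
    intro m; simp only [slope]; split_ifs <;> norm_num
  rw [h1]
  simp_rw [h2]
  rw [sum_slope_some, zero_add]

lemma sum_max_neg_slope (i : Elem n) (s : Slot B) :
    ∑ o : Option (Fin (n s.1)), max (-slope n i s.1 o) 0 =
      if i.1 = s.1 then 1 else 0 := by
  rw [Fintype.sum_option]
  have h1 : max (-slope n i s.1 none) 0 = if i.1 = s.1 then (1:ℝ) else 0 := by
    simp only [slope]; split_ifs <;> norm_num
  have h2 : ∀ m : Fin (n s.1), max (-slope n i s.1 (some m)) 0 = 0 := by
    intro m; simp only [slope]; split_ifs <;> norm_num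
  rw [h1]
  simp_rw [h2]
  simp

lemma Dgrad_eq (f : Finset (Elem n) → ℝ) (y : Elem n → ℝ) (i : Elem n) :
    Dgrad n B f i y = ∑ s : Slot B, (if i.1 = s.1 then (1:ℝ) else 0) *
      ∑ e : Choice n B, jointProb n B y e *
        (f (insert i (chosen n B e (Finset.univ.erase s))) -
          f (chosen n B e (Finset.univ.erase s))) := by
  unfold Dgrad
  simp_rw [Finset.mul_sum]
  rw [Finset.sum_comm]
  refine Finset.sum_congr rfl fun s _ => ?_
  -- abbreviations
  set P : Choice n B → ℝ := fun e => ∏ s' ∈ Finset.univ.erase s, prob n y s'.1 (e s') with hP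
  set G₁ : Choice n B → ℝ :=
    fun e => f (insert i (chosen n B e (Finset.univ.erase s))) * P e with hG₁
  set G₂ : Choice n B → ℝ := fun e => f (chosen n B e (Finset.univ.erase s)) * P e with hG₂
  have hPinv : ∀ (e : Choice n B) (o : Option (Fin (n s.1))),
      P (Function.update e s o) = P e := fun e o => prod_erase_update y e s o
  have hG₁inv : ∀ (e : Choice n B) (o : Option (Fin (n s.1))),
      G₁ (Function.update e s o) = G₁ e := by
    intro e o
    simp only [hG₁]
    rw [chosen_update e s o _ (Finset.notMem_erase s _), hPinv]
  have hG₂inv : ∀ (e : Choice n B) (o : Option (Fin (n s.1))),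
      G₂ (Function.update e s o) = G₂ e := by
    intro e o
    simp only [hG₂]
    rw [chosen_update e s o _ (Finset.notMem_erase s _), hPinv]
  -- pointwise identity
  have hpoint : ∀ e : Choice n B,
      f (chosen n B e Finset.univ) * (slope n i s.1 (e s) * P e) =
        max (slope n i s.1 (e s)) 0 * G₁ e - max (-slope n i s.1 (e s)) 0 * G₂ e := by
    intro e
    rcases he : e s with _ | m
    · rw [chosen_univ_eq e s, he]
      simp only [slope, Option.map_none, Option.toFinset_none, Finset.empty_union, hG₁, hG₂]
      split_ifs <;> norm_num [max_def]
    · rw [chosen_univ_eq e s, he]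
      simp only [slope, Option.map_some, Option.toFinset_some, ← Finset.insert_eq, hG₁, hG₂]
      by_cases hmi : (⟨s.1, m⟩ : Elem n) = i
      · rw [hmi]
        norm_num [max_def]
      · simp [hmi, max_def]
  calc ∑ e : Choice n B, f (chosen n B e Finset.univ) * (slope n i s.1 (e s) * P e)
      = ∑ e : Choice n B, (max (slope n i s.1 (e s)) 0 * G₁ e -
          max (-slope n i s.1 (e s)) 0 * G₂ e) := Finset.sum_congr rfl fun e _ => hpoint e
    _ = (∑ e : Choice n B, max (slope n i s.1 (e s)) 0 * G₁ e) -
          ∑ e : Choice n B, max (-slope n i s.1 (e s)) 0 * G₂ e := Finset.sum_sub_distrib _ _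
    _ = (if i.1 = s.1 then (1:ℝ) else 0) *
          (∑ e : Choice n B, if e s = none then G₁ e else 0) -
        (if i.1 = s.1 then (1:ℝ) else 0) *
          (∑ e : Choice n B, if e s = none then G₂ e else 0) := by
        rw [sum_indep s (fun o => max (slope n i s.1 o) 0) G₁ hG₁inv,
          sum_indep s (fun o => max (-slope n i s.1 o) 0) G₂ hG₂inv,
          sum_max_slope, sum_max_neg_slope]
    _ = (if i.1 = s.1 then (1:ℝ) else 0) *
        ((∑ e : Choice n B, jointProb n B y e *
            f (insert i (chosen n B e (Finset.univ.erase s)))) -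
          ∑ e : Choice n B, jointProb n B y e *
            f (chosen n B e (Finset.univ.erase s))) := by
        have e₁ : (∑ e : Choice n B, jointProb n B y e *
            f (insert i (chosen n B e (Finset.univ.erase s)))) =
            ∑ e : Choice n B, if e s = none then G₁ e else 0 := by
          have := sum_indep s (fun o => prob n y s.1 o) G₁ hG₁inv
          rw [sum_prob, one_mul] at this
          rw [← this]
          refine Finset.sum_congr rfl fun e _ => ?_
          simp only [hG₁, jointProb]
          rw [← Finset.mul_prod_erase Finset.univ _ (Finset.mem_univ s)]
          ring
        have e₂ : (∑ e : Choice n B, jointProb n B y e *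
            f (chosen n B e (Finset.univ.erase s))) =
            ∑ e : Choice n B, if e s = none then G₂ e else 0 := by
          have := sum_indep s (fun o => prob n y s.1 o) G₂ hG₂inv
          rw [sum_prob, one_mul] at this
          rw [← this]
          refine Finset.sum_congr rfl fun e _ => ?_
          simp only [hG₂, jointProb]
          rw [← Finset.mul_prod_erase Finset.univ _ (Finset.mem_univ s)]
          ring
        rw [e₁, e₂, mul_sub]
    _ = _ := by
        rw [← Finset.sum_sub_distrib, Finset.mul_sum]
        refine Finset.sum_congr rfl fun e _ => ?_
        ring

end Aux3

section Aux4

variable {K : ℕ} {n B : Fin K → ℕ}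

lemma sum_if_fst (k : Fin K) :
    ∑ s : Slot B, (if k = s.1 then (1:ℝ) else 0) = (B k : ℝ) := by
  rw [← Finset.univ_sigma_univ, Finset.sum_sigma]
  rw [Finset.sum_eq_single k]
  · simp
  · intro k' _ hk'
    refine Finset.sum_eq_zero fun b _ => ?_
    rw [if_neg]
    exact fun h => hk' h.symm
  · intro h
    exact absurd (Finset.mem_univ k) h

lemma marg_nonneg (f : Finset (Elem n) → ℝ) (hmono : MonotoneSet n f)
    (v : Elem n) (A : Finset (Elem n)) : 0 ≤ marg n f v A :=
  sub_nonneg.mpr (hmono A (insert v A) (Finset.subset_insert v A))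

lemma jointProb_nonneg (y : Elem n → ℝ)
    (hy : ∀ (k : Fin K) (o : Option (Fin (n k))), 0 ≤ prob n y k o) (e : Choice n B) :
    0 ≤ jointProb n B y e :=
  Finset.prod_nonneg fun s _ => hy s.1 (e s)

lemma telescope (f : Finset (Elem n) → ℝ) (α : ℝ) (R : Finset (Elem n))
    (S : Finset (Elem n)) (t : Elem n → ℝ)
    (ht : ∀ i ∈ S, ∀ T : Finset (Elem n), R ⊆ T → α * marg n f i T ≤ t i) :
    α * (f (S ∪ R) - f R) ≤ ∑ i ∈ S, t i := by
  induction S using Finset.induction_on with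
  | empty => simp
  | @insert a S ha ih =>
      have h1 : α * marg n f a (S ∪ R) ≤ t a :=
        ht a (Finset.mem_insert_self a S) _ Finset.subset_union_right
      have h2 := ih fun i hi => ht i (Finset.mem_insert_of_mem hi)
      rw [Finset.insert_union, Finset.sum_insert ha]
      have h3 : α * (f (insert a (S ∪ R)) - f R) =
          α * marg n f a (S ∪ R) + α * (f (S ∪ R) - f R) := by
        unfold marg; ring
      rw [h3]
      exact add_le_add h1 h2

lemma key_ineq (f : Finset (Elem n) → ℝ) (hmono : MonotoneSet n f) (α : ℝ)
    (hα0 : 0 < α) (hDR : WeaklyDR n f α) (hB : ∀ k, 0 < B k)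
    (y : Elem n → ℝ) (hy : ∀ (k : Fin K) (o : Option (Fin (n k))), 0 ≤ prob n y k o)
    (S : Finset (Elem n)) :
    α * (f S - ME n B f y) ≤ ∑ i ∈ S, (B i.1 : ℝ)⁻¹ * Dgrad n B f i y := by
  have hjp : ∀ e, 0 ≤ jointProb n B y e := jointProb_nonneg y hy
  have hRHS : ∑ i ∈ S, (B i.1 : ℝ)⁻¹ * Dgrad n B f i y =
      ∑ e : Choice n B, jointProb n B y e *
        ∑ i ∈ S, (B i.1 : ℝ)⁻¹ * ∑ s : Slot B,
          (if i.1 = s.1 then (1:ℝ) else 0) *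
            marg n f i (chosen n B e (Finset.univ.erase s)) := by
    simp_rw [Dgrad_eq, marg, Finset.mul_sum]
    have h1 : ∀ i ∈ S, (∑ s : Slot B, ∑ e : Choice n B, (B i.1 : ℝ)⁻¹ *
          ((if i.1 = s.1 then (1:ℝ) else 0) * (jointProb n B y e *
            (f (insert i (chosen n B e (Finset.univ.erase s))) -
              f (chosen n B e (Finset.univ.erase s)))))) =
        ∑ e : Choice n B, ∑ s : Slot B, (B i.1 : ℝ)⁻¹ *
          ((if i.1 = s.1 then (1:ℝ) else 0) * (jointProb n B y e *
            (f (insert i (chosen n B e (Finset.univ.erase s))) -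
              f (chosen n B e (Finset.univ.erase s))))) :=
      fun i _ => Finset.sum_comm
    rw [Finset.sum_congr rfl h1, Finset.sum_comm]
    refine Finset.sum_congr rfl fun e _ => Finset.sum_congr rfl fun i _ =>
      Finset.sum_congr rfl fun s _ => by ring
  have hLHS : α * (f S - ME n B f y) = ∑ e : Choice n B, jointProb n B y e *
      (α * (f S - f (chosen n B e Finset.univ))) := by
    unfold ME
    have hj := sum_jointProb (n := n) (B := B) y
    calc α * (f S - ∑ e : Choice n B, f (chosen n B e Finset.univ) * jointProb n B y e)
        = α * f S * (∑ e : Choice n B, jointProb n B y e) -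
            α * ∑ e : Choice n B, f (chosen n B e Finset.univ) * jointProb n B y e := by
          rw [hj]; ring
      _ = ∑ e : Choice n B, (α * f S * jointProb n B y e -
            α * (f (chosen n B e Finset.univ) * jointProb n B y e)) := by
          rw [Finset.mul_sum, Finset.mul_sum, ← Finset.sum_sub_distrib]
      _ = _ := Finset.sum_congr rfl fun e _ => by ring
  rw [hLHS, hRHS]
  refine Finset.sum_le_sum fun e _ => ?_
  refine mul_le_mul_of_nonneg_left ?_ (hjp e)
  have h2 : α * (f S - f (chosen n B e Finset.univ)) ≤
      α * (f (S ∪ chosen n B e Finset.univ) - f (chosen n B e Finset.univ)) := by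
    refine mul_le_mul_of_nonneg_left ?_ hα0.le
    exact sub_le_sub_right (hmono S (S ∪ chosen n B e Finset.univ)
      Finset.subset_union_left) _
  refine h2.trans (telescope f α (chosen n B e Finset.univ) S _ ?_)
  intro i hi T hT
  have hs : ∀ s : Slot B, (if i.1 = s.1 then (1:ℝ) else 0) * (α * marg n f i T) ≤
      (if i.1 = s.1 then (1:ℝ) else 0) *
        marg n f i (chosen n B e (Finset.univ.erase s)) := by
    intro s
    by_cases hc : i.1 = s.1
    · rw [if_pos hc, one_mul, one_mul]
      by_cases hiT : i ∈ T
      · have hz : marg n f i T = 0 := by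
          unfold marg; rw [Finset.insert_eq_self.mpr hiT]; ring
        rw [hz, mul_zero]
        exact marg_nonneg f hmono i _
      · exact hDR _ T ((chosen_mono e (Finset.erase_subset s Finset.univ)).trans hT) i hiT
    · simp [hc]
  have hsum := Finset.sum_le_sum fun s (_ : s ∈ Finset.univ) => hs s
  rw [← Finset.sum_mul, sum_if_fst i.1] at hsum
  have hBpos : (0:ℝ) < (B i.1 : ℝ) := by exact_mod_cast hB i.1
  calc α * marg n f i T = (B i.1 : ℝ)⁻¹ * ((B i.1 : ℝ) * (α * marg n f i T)) := by
        field_simp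
    _ ≤ _ := mul_le_mul_of_nonneg_left hsum (inv_nonneg.mpr hBpos.le)

end Aux4

section Aux5

variable {K : ℕ} {n B : Fin K → ℕ}

def slopeZ (n : Fin K → ℕ) (x : Elem n → ℝ) (k : Fin K) : Option (Fin (n k)) → ℝ
  | some m => x ⟨k, m⟩
  | none => -∑ m : Fin (n k), x ⟨k, m⟩

lemma sum_fiber_x (x : Elem n → ℝ) (k : Fin K) :
    ∑ i : Elem n, (if i.1 = k then x i else 0) = ∑ m : Fin (n k), x ⟨k, m⟩ := by
  rw [← Finset.univ_sigma_univ, Finset.sum_sigma]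
  rw [Finset.sum_eq_single k]
  · simp
  · intro k' _ hk'
    exact Finset.sum_eq_zero fun m _ => if_neg hk'
  · intro h
    exact absurd (Finset.mem_univ k) h

lemma sum_x_slope (x : Elem n → ℝ) (k : Fin K) (o : Option (Fin (n k))) :
    ∑ i : Elem n, x i * slope n i k o = slopeZ n x k o := by
  cases o with
  | some m =>
      simp only [slope, slopeZ, mul_ite, mul_one, mul_zero]
      rw [Finset.sum_ite_eq]
      simp
  | none =>
      simp only [slope, slopeZ, mul_ite, mul_neg, mul_one, mul_zero]
      rw [← sum_fiber_x x k, ← Finset.sum_neg_distrib]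
      refine Finset.sum_congr rfl fun i _ => ?_
      split_ifs <;> simp

lemma prob_z_hasDerivAt (x : Elem n → ℝ) (k : Fin K) (o : Option (Fin (n k))) (z : ℝ) :
    HasDerivAt (fun z => prob n (fun j => z * x j) k o) (slopeZ n x k o) z := by
  cases o with
  | some m =>
      simpa [prob, slopeZ] using (hasDerivAt_id z).mul_const (x ⟨k, m⟩)
  | none =>
      simp only [prob, slopeZ]
      have hs : HasDerivAt (fun z => ∑ m : Fin (n k), z * x ⟨k, m⟩)
          (∑ m : Fin (n k), x ⟨k, m⟩) z :=
        HasDerivAt.fun_sum (u := Finset.univ) fun m _ => by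
          simpa using (hasDerivAt_id z).mul_const (x ⟨k, m⟩)
      simpa using hs.const_sub 1

lemma g_hasDerivAt (f : Finset (Elem n) → ℝ) (x : Elem n → ℝ) (z : ℝ) :
    HasDerivAt (fun z => ME n B f (fun j => z * x j))
      (∑ i : Elem n, x i * Dgrad n B f i (fun j => z * x j)) z := by
  have hprod : ∀ e : Choice n B, HasDerivAt (fun z => jointProb n B (fun j => z * x j) e)
      (∑ s : Slot B, slopeZ n x s.1 (e s) *
        ∏ s' ∈ Finset.univ.erase s, prob n (fun j => z * x j) s'.1 (e s')) z := by
    intro e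
    have h := HasDerivAt.fun_finsetProd (u := (Finset.univ : Finset (Slot B)))
      (f := fun s z => prob n (fun j => z * x j) s.1 (e s))
      (f' := fun s => slopeZ n x s.1 (e s))
      (fun s _ => prob_z_hasDerivAt x s.1 (e s) z)
    simp only [smul_eq_mul] at h
    have hc : (∑ s : Slot B, slopeZ n x s.1 (e s) *
        ∏ s' ∈ Finset.univ.erase s, prob n (fun j => z * x j) s'.1 (e s')) =
        ∑ s : Slot B, (∏ s' ∈ Finset.univ.erase s, prob n (fun j => z * x j) s'.1 (e s')) *
          slopeZ n x s.1 (e s) := Finset.sum_congr rfl fun s _ => mul_comm _ _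
    rw [hc]
    exact h
  have hME := HasDerivAt.fun_sum (u := (Finset.univ : Finset (Choice n B)))
    fun e _ => (hprod e).const_mul (f (chosen n B e Finset.univ))
  have hid : (∑ i : Elem n, x i * Dgrad n B f i (fun j => z * x j)) =
      ∑ e : Choice n B, f (chosen n B e Finset.univ) *
        ∑ s : Slot B, slopeZ n x s.1 (e s) *
          ∏ s' ∈ Finset.univ.erase s, prob n (fun j => z * x j) s'.1 (e s') := by
    unfold Dgrad
    simp_rw [Finset.mul_sum]
    rw [Finset.sum_comm]
    refine Finset.sum_congr rfl fun e _ => ?_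
    rw [Finset.sum_comm]
    refine Finset.sum_congr rfl fun s _ => ?_
    have : ∀ i : Elem n, x i * (f (chosen n B e Finset.univ) * (slope n i s.1 (e s) *
        ∏ s' ∈ Finset.univ.erase s, prob n (fun j => z * x j) s'.1 (e s'))) =
        (x i * slope n i s.1 (e s)) * (f (chosen n B e Finset.univ) *
          ∏ s' ∈ Finset.univ.erase s, prob n (fun j => z * x j) s'.1 (e s')) :=
      fun i => by ring
    rw [Finset.sum_congr rfl fun i _ => this i, ← Finset.sum_mul, sum_x_slope]
    ring
  rw [hid]
  exact hME

lemma ME_zero (f : Finset (Elem n) → ℝ) (hfempty : f ∅ = 0) (x : Elem n → ℝ) :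
    ME n B f (fun j => (0:ℝ) * x j) = 0 := by
  unfold ME
  refine Finset.sum_eq_zero fun e _ => ?_
  by_cases h : ∀ s : Slot B, e s = none
  · have hch : chosen n B e Finset.univ = ∅ := by
      unfold chosen
      simp only [h, Option.map_none, Option.toFinset_none]
      ext v
      simp
    rw [hch, hfempty, zero_mul]
  · push_neg at h
    obtain ⟨s, hs⟩ := h
    have hz : jointProb n B (fun j => 0 * x j) e = 0 := by
      refine Finset.prod_eq_zero (Finset.mem_univ s) ?_
      rcases he : e s with _ | m
      · exact absurd he hs
      · simp [prob]
    rw [hz, mul_zero]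

lemma cont_prob (x : Elem n → ℝ) (k : Fin K) (o : Option (Fin (n k))) :
    Continuous fun z : ℝ => prob n (fun j => z * x j) k o := by
  cases o with
  | some m =>
      simp only [prob]
      exact continuous_id.mul continuous_const
  | none =>
      simp only [prob]
      exact continuous_const.sub
        (continuous_finset_sum _ fun m _ => continuous_id.mul continuous_const)

lemma cont_ME (f : Finset (Elem n) → ℝ) (x : Elem n → ℝ) :
    Continuous fun z : ℝ => ME n B f (fun j => z * x j) := by
  unfold ME jointProb
  exact continuous_finset_sum _ fun e _ => continuous_const.mul
    (continuous_finset_prod _ fun s _ => cont_prob x s.1 (e s))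

lemma cont_Dgrad (f : Finset (Elem n) → ℝ) (x : Elem n → ℝ) (i : Elem n) :
    Continuous fun z : ℝ => Dgrad n B f i (fun j => z * x j) := by
  unfold Dgrad
  exact continuous_finset_sum _ fun e _ => continuous_const.mul
    (continuous_finset_sum _ fun s _ => continuous_const.mul
      (continuous_finset_prod _ fun s' _ => cont_prob x s'.1 (e s')))

end Aux5

theorem multinoulliExtension_aux_dr {K : ℕ} (n B : Fin K → ℕ) (hn : ∀ k, 1 ≤ n k)
    (hB : ∀ k, 0 < B k) (hBn : ∀ k, B k ≤ n k)
    (f : Finset (Elem n) → ℝ) (hf0 : ∀ S, 0 ≤ f S)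
    (hmono : MonotoneSet n f)
    (α : ℝ) (hα0 : 0 < α) (hα1 : α ≤ 1) (hDR : WeaklyDR n f α)
    (hfempty : f ∅ = 0)
    (x : Elem n → ℝ) (hx : InSimplex n x)
    (S : Finset (Elem n)) (hS : Feasible n B S) :
    (1 - Real.exp (-α)) * f S - ME n B f x ≤
      inner' n (fun i => indVec n B S i - x i)
        (auxGrad n B f (fun z => Real.exp (α * (z - 1))) x) := by
  classical
  set w : ℝ → ℝ := fun z => Real.exp (α * (z - 1)) with hw
  have contw : Continuous w := by
    exact Real.continuous_exp.comp (continuous_const.mul (continuous_id.sub continuous_const))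
  have contg : Continuous fun z : ℝ => ME n B f (fun j => z * x j) := cont_ME f x
  have contgd : Continuous fun z : ℝ =>
      ∑ i : Elem n, x i * Dgrad n B f i (fun j => z * x j) :=
    continuous_finset_sum _ fun i _ => continuous_const.mul (cont_Dgrad f x i)
  have contA : Continuous fun z : ℝ =>
      ∑ i ∈ S, (B i.1 : ℝ)⁻¹ * Dgrad n B f i (fun j => z * x j) :=
    continuous_finset_sum _ fun i _ => continuous_const.mul (cont_Dgrad f x i)
  -- Step A : rewrite the inner product as a single integral
  have h1 : inner' n (fun i => indVec n B S i - x i) (auxGrad n B f w x) =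
      ∫ z in (0:ℝ)..1, ∑ i : Elem n,
        (indVec n B S i - x i) * (w z * Dgrad n B f i (fun j => z * x j)) := by
    unfold inner'
    rw [intervalIntegral.integral_finset_sum]
    · refine Finset.sum_congr rfl fun i _ => ?_
      rw [intervalIntegral.integral_const_mul]
      congr 1
      simp only [auxGrad, grad_ME]
    · intro i _
      exact (continuous_const.mul (contw.mul (cont_Dgrad f x i))).intervalIntegrable 0 1
  -- Step B : pointwise rearrangement of the integrand
  have hpt : ∀ z : ℝ, (∑ i : Elem n,
      (indVec n B S i - x i) * (w z * Dgrad n B f i (fun j => z * x j))) =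
      w z * ((∑ i ∈ S, (B i.1 : ℝ)⁻¹ * Dgrad n B f i (fun j => z * x j)) -
        ∑ i : Elem n, x i * Dgrad n B f i (fun j => z * x j)) := by
    intro z
    rw [mul_sub, Finset.mul_sum, Finset.mul_sum]
    simp_rw [sub_mul]
    rw [Finset.sum_sub_distrib]
    congr 1
    · simp_rw [indVec, ite_mul, zero_mul]
      rw [Finset.sum_ite_mem, Finset.univ_inter]
      exact Finset.sum_congr rfl fun i _ => by ring
    · exact Finset.sum_congr rfl fun i _ => by ring
  -- Step C : pointwise lower bound for the integrand on [0,1]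
  have hlow : ∀ z ∈ Set.Icc (0:ℝ) 1,
      w z * (α * (f S - ME n B f (fun j => z * x j)) -
        ∑ i : Elem n, x i * Dgrad n B f i (fun j => z * x j)) ≤
      w z * ((∑ i ∈ S, (B i.1 : ℝ)⁻¹ * Dgrad n B f i (fun j => z * x j)) -
        ∑ i : Elem n, x i * Dgrad n B f i (fun j => z * x j)) := by
    intro z hz
    refine mul_le_mul_of_nonneg_left (sub_le_sub_right ?_ _) (Real.exp_pos _).le
    refine key_ineq f hmono α hα0 hDR hB _ ?_ S
    intro k o
    cases o with
    | some m => exact mul_nonneg hz.1 (hx.1 _)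
    | none =>
        simp only [prob]
        rw [show (∑ m : Fin (n k), z * x ⟨k, m⟩) = z * ∑ m : Fin (n k), x ⟨k, m⟩ from
          (Finset.mul_sum _ _ _).symm]
        have h01 : z * ∑ m : Fin (n k), x ⟨k, m⟩ ≤ 1 :=
          mul_le_one₀ hz.2 (Finset.sum_nonneg fun m _ => hx.1 _) (hx.2 k)
        linarith
  -- Step D : integral monotonicity
  have hint : (∫ z in (0:ℝ)..1, w z * (α * (f S - ME n B f (fun j => z * x j)) -
        ∑ i : Elem n, x i * Dgrad n B f i (fun j => z * x j))) ≤
      ∫ z in (0:ℝ)..1, w z * ((∑ i ∈ S, (B i.1 : ℝ)⁻¹ *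
          Dgrad n B f i (fun j => z * x j)) -
        ∑ i : Elem n, x i * Dgrad n B f i (fun j => z * x j)) := by
    refine intervalIntegral.integral_mono_on zero_le_one ?_ ?_ hlow
    · exact (contw.mul (((continuous_const.mul (continuous_const.sub contg)).sub
        contgd))).intervalIntegrable 0 1
    · exact (contw.mul (contA.sub contgd)).intervalIntegrable 0 1
  -- Step E : exact value of the lower integral
  have hexp : ∀ z : ℝ, HasDerivAt w (α * w z) z := by
    intro z
    have h := (((hasDerivAt_id z).sub_const 1).const_mul α).exp
    simpa [hw, mul_comm] using h
  have hIw : (∫ z in (0:ℝ)..1, α * w z) = 1 - Real.exp (-α) := by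
    rw [intervalIntegral.integral_eq_sub_of_hasDerivAt (fun z _ => hexp z)
      ((continuous_const.mul contw).intervalIntegrable 0 1)]
    simp [hw]
  have hwg : ∀ z : ℝ, HasDerivAt (fun z => w z * ME n B f (fun j => z * x j))
      (α * w z * ME n B f (fun j => z * x j) +
        w z * ∑ i : Elem n, x i * Dgrad n B f i (fun j => z * x j)) z := by
    intro z
    have h := (hexp z).fun_mul (g_hasDerivAt (B := B) f x z)
    simpa [mul_assoc] using h
  have hIwg : (∫ z in (0:ℝ)..1, (α * w z * ME n B f (fun j => z * x j) +
      w z * ∑ i : Elem n, x i * Dgrad n B f i (fun j => z * x j))) = ME n B f x := by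
    rw [intervalIntegral.integral_eq_sub_of_hasDerivAt (fun z _ => hwg z)
      ((((continuous_const.mul contw).mul contg).add (contw.mul contgd)).intervalIntegrable 0 1)]
    have hg1 : ME n B f (fun j => (1:ℝ) * x j) = ME n B f x := by
      congr 1
      funext j
      rw [one_mul]
    have hg0 : ME n B f (fun j => (0:ℝ) * x j) = 0 := ME_zero f hfempty x
    rw [hg1, hg0]
    simp [hw]
  have hEval : (∫ z in (0:ℝ)..1, w z * (α * (f S - ME n B f (fun j => z * x j)) -
      ∑ i : Elem n, x i * Dgrad n B f i (fun j => z * x j))) =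
      (1 - Real.exp (-α)) * f S - ME n B f x := by
    have hsplit : (∫ z in (0:ℝ)..1, w z * (α * (f S - ME n B f (fun j => z * x j)) -
        ∑ i : Elem n, x i * Dgrad n B f i (fun j => z * x j))) =
        (∫ z in (0:ℝ)..1, f S * (α * w z)) -
          ∫ z in (0:ℝ)..1, (α * w z * ME n B f (fun j => z * x j) +
            w z * ∑ i : Elem n, x i * Dgrad n B f i (fun j => z * x j)) := by
      rw [← intervalIntegral.integral_sub]
      · refine intervalIntegral.integral_congr fun z _ => ?_
        ring
      · exact (continuous_const.mul (continuous_const.mul contw)).intervalIntegrable 0 1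
      · exact (((continuous_const.mul contw).mul contg).add
          (contw.mul contgd)).intervalIntegrable 0 1
    rw [hsplit, intervalIntegral.integral_const_mul, hIw, hIwg]
    ring
  -- Final assembly
  rw [h1]
  have h2 : (∫ z in (0:ℝ)..1, ∑ i : Elem n,
      (indVec n B S i - x i) * (w z * Dgrad n B f i (fun j => z * x j))) =
      ∫ z in (0:ℝ)..1, w z * ((∑ i ∈ S, (B i.1 : ℝ)⁻¹ *
          Dgrad n B f i (fun j => z * x j)) -
        ∑ i : Elem n, x i * Dgrad n B f i (fun j => z * x j)) :=
    intervalIntegral.integral_congr fun z _ => hpt z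
  rw [h2, ← hEval]
  exact hint

end Multinoulli
end
end

section
/- For any set function f : 2^V → ℝ≥0, any point (p_1,…,p_K) ∈ ∏_{k=1}^K Δ_{n_k}, any indices k_1 ≠ k_2 in {1,…,K}, and any m_1 ∈ {1,…,n_{k_1}}, m_2 ∈ {1,…,n_{k_2}}, the second-order partial derivative of the Multinoulli Extension satisfies ∂²F/∂p_{k_1}^{m_1}∂p_{k_2}^{m_2} (p_1,…,p_K) = B_{k_1}·B_{k_2} · E[ f(v_{k_1}^{m_1} | S ∪ {v_{k_2}^{m_2}}) − f(v_{k_1}^{m_1} | S) ], where S = ∪_{(k̂,b̂) ∉ {(k_1,1),(k_2,1)}} {e_{k̂}^{b̂}}, the union ranges over all pairs (k̂,b̂) with k̂ ∈ {1,…,K}, b̂ ∈ {1,…,B_{k̂}} except (k_1,1) and (k_2,1), and the random elements e_{k̂}^{b̂} are mutually independent with e_{k̂}^{b̂} ∼ Multi(p_{k̂}). -/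
open Finset

noncomputable section

namespace Multinoulli

variable {K : ℕ}

section Aux

variable {K : ℕ} (n B : Fin K → ℕ)

lemma prob_sum_option (x : Elem n → ℝ) (k : Fin K) :
    ∑ o : Option (Fin (n k)), prob n x k o = 1 := by
  rw [Fintype.sum_option]
  simp [prob]

/-- slope of a single probability factor w.r.t. coordinate `⟨k,m⟩` -/
def cslope (k : Fin K) (m : Fin (n k)) (s : Slot B) : Option (Fin (n s.1)) → ℝ
  | some m' => if (⟨s.1, m'⟩ : Elem n) = ⟨k, m⟩ then 1 else 0
  | none => if s.1 = k then -1 else 0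

lemma hasDerivAt_prob (x : Elem n → ℝ) (k : Fin K) (m : Fin (n k)) (k' : Fin K)
    (b : Fin (B k')) (o : Option (Fin (n k'))) (t : ℝ) :
    HasDerivAt (fun t => prob n (Function.update x ⟨k, m⟩ t) k' o)
      (cslope n B k m ⟨k', b⟩ o) t := by
  cases o with
  | some m' =>
    simp only [prob, cslope, Function.update_apply]
    by_cases h : (⟨k', m'⟩ : Elem n) = ⟨k, m⟩
    · simp only [h, if_pos rfl, if_true]
      exact hasDerivAt_id t
    · simp only [if_neg h]
      exact hasDerivAt_const t _
  | none =>
    simp only [prob, cslope]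
    by_cases h : k' = k
    · subst h
      simp only [if_pos rfl]
      have hsum : HasDerivAt
          (fun t => ∑ m' : Fin (n k'), Function.update x ⟨k', m⟩ t ⟨k', m'⟩) 1 t := by
        have hterm : ∀ m' : Fin (n k'), HasDerivAt
            (fun t => Function.update x ⟨k', m⟩ t ⟨k', m'⟩)
            (if m' = m then 1 else 0) t := by
          intro m'
          by_cases hm : m' = m
          · subst hm; simp only [Function.update_self, if_pos rfl]; exact hasDerivAt_id t
          · have hne : (⟨k', m'⟩ : Elem n) ≠ ⟨k', m⟩ := by simp [hm]
            simp only [Function.update_of_ne hne, if_neg hm]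
            exact hasDerivAt_const t _
        have h2 := HasDerivAt.fun_sum (u := Finset.univ) (fun i _ => hterm i)
        simpa [Finset.sum_ite_eq' Finset.univ m] using h2
      simpa using (hasDerivAt_const t (1:ℝ)).fun_sub hsum
    · have hc : ∀ m' : Fin (n k'), (⟨k', m'⟩ : Elem n) ≠ ⟨k, m⟩ := by
        intro m'; simp [h]
      simp only [if_neg h]
      have heq : (fun t => 1 - ∑ m' : Fin (n k'), Function.update x ⟨k, m⟩ t ⟨k', m'⟩)
          = fun _ => 1 - ∑ m' : Fin (n k'), x ⟨k', m'⟩ := by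
        funext t; congr 1; exact Finset.sum_congr rfl fun m' _ => by
          rw [Function.update_of_ne (hc m')]
      rw [heq]
      exact hasDerivAt_const t _

end Aux
section Aux2

variable {K : ℕ} (n B : Fin K → ℕ)

/-- product of probabilities over all slots except `s₀` -/
def restProb (s₀ : Slot B) (x : Elem n → ℝ) (e : Choice n B) : ℝ :=
  ∏ s ∈ Finset.univ.erase s₀, prob n x s.1 (e s)

lemma jointProb_eq_mul_rest (s₀ : Slot B) (x : Elem n → ℝ) (e : Choice n B) :
    jointProb n B x e = prob n x s₀.1 (e s₀) * restProb n B s₀ x e := by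
  rw [jointProb, restProb, ← Finset.mul_prod_erase Finset.univ _ (Finset.mem_univ s₀)]

lemma restProb_update (s₀ : Slot B) (x : Elem n → ℝ) (e : Choice n B)
    (o : Option (Fin (n s₀.1))) :
    restProb n B s₀ x (Function.update e s₀ o) = restProb n B s₀ x e := by
  refine Finset.prod_congr rfl fun s hs => ?_
  rw [Function.update_of_ne (Finset.ne_of_mem_erase hs)]

lemma jointProb_update (s₀ : Slot B) (x : Elem n → ℝ) (e : Choice n B)
    (o : Option (Fin (n s₀.1))) :
    jointProb n B x (Function.update e s₀ o) = prob n x s₀.1 o * restProb n B s₀ x e := by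
  rw [jointProb_eq_mul_rest n B s₀, Function.update_self, restProb_update]

/-- Marginalization/exchange: sums against weights with the same total agree. -/
lemma sum_weight_exchange (s₀ : Slot B) (φ : Choice n B → ℝ)
    (hφ : ∀ e o, φ (Function.update e s₀ o) = φ e)
    (w w' : Option (Fin (n s₀.1)) → ℝ) (hw : ∑ o, w o = ∑ o, w' o) :
    ∑ e : Choice n B, φ e * w (e s₀) = ∑ e : Choice n B, φ e * w' (e s₀) := by
  classical
  set ψ := (Equiv.piSplitAt s₀ fun s : Slot B => Option (Fin (n s.1))).symm with hψ
  have key : ∀ (w : Option (Fin (n s₀.1)) → ℝ),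
      ∑ e : Choice n B, φ e * w (e s₀)
        = ∑ r, φ (ψ (none, r)) * ∑ o, w o := by
    intro w
    rw [← Equiv.sum_comp ψ (fun e => φ e * w (e s₀)), Fintype.sum_prod_type]
    rw [Finset.sum_comm]
    refine Finset.sum_congr rfl fun r _ => ?_
    rw [Finset.mul_sum]
    refine Finset.sum_congr rfl fun o _ => ?_
    have h1 : ψ (o, r) s₀ = o := by simp [hψ, Equiv.piSplitAt]
    have h2 : ψ (o, r) = Function.update (ψ (none, r)) s₀ o := by
      funext s
      by_cases h : s = s₀
      · subst h; simp [hψ, Equiv.piSplitAt, Function.update_self]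
      · simp [hψ, Equiv.piSplitAt, h, Function.update_of_ne h]
    rw [h1, h2, hφ]
  rw [key w, key w', hw]

end Aux2
section Aux3

variable {K : ℕ} (n B : Fin K → ℕ)

lemma cslope_ne (k : Fin K) (m : Fin (n k)) (k' : Fin K) (b : Fin (B k'))
    (h : k' ≠ k) (o : Option (Fin (n k'))) : cslope n B k m ⟨k', b⟩ o = 0 := by
  cases o with
  | some m' => simp [cslope, h]
  | none => simp [cslope, h]

lemma exchange (g : Choice n B → ℝ) (k : Fin K) (m : Fin (n k)) (b : Fin (B k))
    (x : Elem n → ℝ) :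
    ∑ e : Choice n B,
        g e * cslope n B k m ⟨k, b⟩ (e ⟨k, b⟩) * restProb n B ⟨k, b⟩ x e
      = ∑ e : Choice n B,
        (g (Function.update e ⟨k, b⟩ (some m)) - g (Function.update e ⟨k, b⟩ none)) *
          jointProb n B x e := by
  classical
  set s₀ : Slot B := ⟨k, b⟩ with hs₀
  have hpt : ∀ e : Choice n B,
      g e * cslope n B k m s₀ (e s₀)
        = g (Function.update e s₀ (some m)) * (if e s₀ = some m then 1 else 0)
          - g (Function.update e s₀ none) * (if e s₀ = none then 1 else 0) := by
    intro e
    rcases he : e s₀ with _ | m'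
    · have h1 : Function.update e s₀ none = e := by rw [← he, Function.update_eq_self]
      simp [cslope, h1, he, show s₀.fst = k from rfl]
    · have h2 : (if e s₀ = (none : Option (Fin (n k))) then (1:ℝ) else 0) = 0 := by
        rw [he]; simp
      by_cases hm : m' = m
      · subst hm
        have h1 : Function.update e s₀ (some m') = e := by
          rw [← he, Function.update_eq_self]
        simp [cslope, h1, he, h2, show s₀.fst = k from rfl]
      · have h3 : (⟨k, m'⟩ : Elem n) ≠ ⟨k, m⟩ := by simp [hm]
        simp [cslope, he, h2, h3, hm]
  have step1 : ∑ e : Choice n B,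
      g e * cslope n B k m s₀ (e s₀) * restProb n B s₀ x e
      = (∑ e : Choice n B, (g (Function.update e s₀ (some m)) * restProb n B s₀ x e) *
          (if e s₀ = some m then 1 else 0))
        - ∑ e : Choice n B, (g (Function.update e s₀ none) * restProb n B s₀ x e) *
          (if e s₀ = none then 1 else 0) := by
    rw [← Finset.sum_sub_distrib]
    refine Finset.sum_congr rfl fun e _ => ?_
    rw [hpt e]; ring
  have hφ : ∀ (o₀ : Option (Fin (n k))) (e : Choice n B) (o : Option (Fin (n s₀.1))),
      g (Function.update (Function.update e s₀ o) s₀ o₀) *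
          restProb n B s₀ x (Function.update e s₀ o)
        = g (Function.update e s₀ o₀) * restProb n B s₀ x e := by
    intro o₀ e o
    rw [Function.update_idem, restProb_update]
  have hw1 : ∑ o : Option (Fin (n k)), (if o = some m then (1:ℝ) else 0)
      = ∑ o : Option (Fin (n k)), prob n x k o := by
    rw [prob_sum_option]
    simp
  have hw2 : ∑ o : Option (Fin (n k)), (if o = none then (1:ℝ) else 0)
      = ∑ o : Option (Fin (n k)), prob n x k o := by
    rw [prob_sum_option]
    simp
  rw [step1,
    sum_weight_exchange n B s₀ _ (hφ (some m)) _ _ hw1,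
    sum_weight_exchange n B s₀ _ (hφ none) _ _ hw2,
    ← Finset.sum_sub_distrib]
  refine Finset.sum_congr rfl fun e _ => ?_
  rw [jointProb_eq_mul_rest n B s₀]
  ring

end Aux3
section Aux4

variable {K : ℕ} (n B : Fin K → ℕ)

lemma hasDerivAt_jointProb (x : Elem n → ℝ) (k : Fin K) (m : Fin (n k)) (e : Choice n B) :
    HasDerivAt (fun t => jointProb n B (Function.update x ⟨k, m⟩ t) e)
      (∑ s : Slot B, restProb n B s x e * cslope n B k m s (e s)) (x ⟨k, m⟩) := by
  have h := HasDerivAt.fun_finsetProd (u := (Finset.univ : Finset (Slot B)))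
    (f := fun s t => prob n (Function.update x ⟨k, m⟩ t) s.1 (e s))
    (f' := fun s => cslope n B k m s (e s)) (x := x ⟨k, m⟩)
    (fun s _ => by
      obtain ⟨k', b⟩ := s
      exact hasDerivAt_prob n B x k m k' b (e ⟨k', b⟩) (x ⟨k, m⟩))
  have hx : Function.update x ⟨k, m⟩ (x ⟨k, m⟩) = x := Function.update_eq_self _ _
  simp only [hx, smul_eq_mul] at h
  exact h

lemma hasDerivAt_sum_jointProb (g : Choice n B → ℝ) (k : Fin K) (m : Fin (n k))
    (x : Elem n → ℝ) :
    HasDerivAt (fun t => ∑ e : Choice n B, g e * jointProb n B (Function.update x ⟨k, m⟩ t) e)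
      (∑ b : Fin (B k), ∑ e : Choice n B,
        (g (Function.update e ⟨k, b⟩ (some m)) - g (Function.update e ⟨k, b⟩ none)) *
          jointProb n B x e)
      (x ⟨k, m⟩) := by
  have h := HasDerivAt.fun_sum (u := (Finset.univ : Finset (Choice n B)))
    (fun e _ => (hasDerivAt_jointProb n B x k m e).const_mul (g e))
  have hval : ∑ e : Choice n B,
      g e * ∑ s : Slot B, restProb n B s x e * cslope n B k m s (e s)
      = ∑ b : Fin (B k), ∑ e : Choice n B,
        (g (Function.update e ⟨k, b⟩ (some m)) - g (Function.update e ⟨k, b⟩ none)) *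
          jointProb n B x e := by
    have swap1 : ∑ e : Choice n B,
        g e * ∑ s : Slot B, restProb n B s x e * cslope n B k m s (e s)
        = ∑ s : Slot B, ∑ e : Choice n B,
          g e * cslope n B k m s (e s) * restProb n B s x e := by
      simp_rw [Finset.mul_sum]
      rw [Finset.sum_comm]
      exact Finset.sum_congr rfl fun s _ => Finset.sum_congr rfl fun e _ => by ring
    rw [swap1]
    rw [← Finset.univ_sigma_univ, Finset.sum_sigma]
    rw [Finset.sum_eq_single_of_mem k (Finset.mem_univ k)]
    · exact Finset.sum_congr rfl fun b _ => exchange n B g k m b x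
    · intro k' _ hk'
      refine Finset.sum_eq_zero fun b _ => Finset.sum_eq_zero fun e _ => ?_
      rw [cslope_ne n B k m k' b hk', mul_zero, zero_mul]
  rw [← hval]
  exact h

/-- First-derivative formula for any function of the form `y ↦ ∑ₑ g e · jointProb y e`. -/
lemma pderiv_sum_jointProb (g : Choice n B → ℝ) (k : Fin K) (m : Fin (n k))
    (x : Elem n → ℝ) :
    pderiv n (fun y => ∑ e : Choice n B, g e * jointProb n B y e) ⟨k, m⟩ x
      = ∑ b : Fin (B k), ∑ e : Choice n B,
        (g (Function.update e ⟨k, b⟩ (some m)) - g (Function.update e ⟨k, b⟩ none)) *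
          jointProb n B x e :=
  (hasDerivAt_sum_jointProb n B g k m x).deriv

end Aux4
section Aux5

variable {K : ℕ} (n B : Fin K → ℕ)

lemma chosen_congr (e e' : Choice n B) (A : Finset (Slot B))
    (h : ∀ s ∈ A, e s = e' s) : chosen n B e A = chosen n B e' A :=
  Finset.biUnion_congr rfl fun s hs => by rw [h s hs]

lemma chosen_update_mem (e : Choice n B) (A : Finset (Slot B)) (s : Slot B) (hs : s ∈ A)
    (o : Option (Fin (n s.1))) :
    chosen n B (Function.update e s o) A
      = (o.map fun m => (⟨s.1, m⟩ : Elem n)).toFinset ∪ chosen n B e (A.erase s) := by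
  have h1 : A = insert s (A.erase s) := (Finset.insert_erase hs).symm
  rw [chosen, h1, Finset.biUnion_insert, Function.update_self,
    Finset.erase_insert (Finset.notMem_erase s A)]
  congr 1
  exact Finset.biUnion_congr rfl fun s' hs' => by
    rw [Function.update_of_ne (Finset.ne_of_mem_erase hs')]

/-- the choice obtained by swapping the outcomes at slots `⟨k,b⟩` and `⟨k,b'⟩` -/
def swapC (k : Fin K) (b b' : Fin (B k)) (e : Choice n B) : Choice n B :=
  Function.update (Function.update e ⟨k, b⟩ (e ⟨k, b'⟩)) ⟨k, b'⟩ (e ⟨k, b⟩)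

lemma swapC_self (k : Fin K) (b : Fin (B k)) (e : Choice n B) : swapC n B k b b e = e := by
  rw [swapC, Function.update_idem, Function.update_eq_self]

lemma swapC_apply_left (k : Fin K) (b b' : Fin (B k)) (hbb : b ≠ b') (e : Choice n B) :
    swapC n B k b b' e ⟨k, b⟩ = e ⟨k, b'⟩ := by
  have hne : (⟨k, b⟩ : Slot B) ≠ ⟨k, b'⟩ := by simp [hbb]
  rw [swapC, Function.update_of_ne hne, Function.update_self]

lemma swapC_apply_right (k : Fin K) (b b' : Fin (B k)) (e : Choice n B) :
    swapC n B k b b' e ⟨k, b'⟩ = e ⟨k, b⟩ := by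
  rw [swapC, Function.update_self]

lemma swapC_apply_other (k : Fin K) (b b' : Fin (B k)) (e : Choice n B) (s : Slot B)
    (h1 : s ≠ ⟨k, b⟩) (h2 : s ≠ ⟨k, b'⟩) : swapC n B k b b' e s = e s := by
  rw [swapC, Function.update_of_ne h2, Function.update_of_ne h1]

lemma swapC_involutive (k : Fin K) (b b' : Fin (B k)) :
    Function.Involutive (swapC n B k b b') := by
  intro e
  by_cases hbb : b = b'
  · subst hbb; rw [swapC_self, swapC_self]
  · funext s
    by_cases h1 : s = ⟨k, b⟩
    · subst h1
      rw [swapC_apply_left n B k b b' hbb, swapC_apply_right]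
    · by_cases h2 : s = ⟨k, b'⟩
      · subst h2
        rw [swapC_apply_right, swapC_apply_left n B k b b' hbb]
      · rw [swapC_apply_other n B k b b' _ s h1 h2, swapC_apply_other n B k b b' e s h1 h2]

lemma prod_prob_update (A : Finset (Slot B)) (s : Slot B) (hs : s ∈ A) (x : Elem n → ℝ)
    (e : Choice n B) (o : Option (Fin (n s.1))) :
    ∏ s' ∈ A, prob n x s'.1 (Function.update e s o s')
      = prob n x s.1 o * ∏ s' ∈ A.erase s, prob n x s'.1 (e s') := by
  rw [← Finset.insert_erase hs, Finset.prod_insert (Finset.notMem_erase s A),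
    Function.update_self, Finset.erase_insert (Finset.notMem_erase s A)]
  congr 1
  exact Finset.prod_congr rfl fun s' hs' => by
    rw [Function.update_of_ne (Finset.ne_of_mem_erase hs')]

lemma jointProb_swapC (k : Fin K) (b b' : Fin (B k)) (x : Elem n → ℝ) (e : Choice n B) :
    jointProb n B x (swapC n B k b b' e) = jointProb n B x e := by
  by_cases hbb : b = b'
  · subst hbb; rw [swapC_self]
  · have hne : (⟨k, b⟩ : Slot B) ≠ ⟨k, b'⟩ := by simp [hbb]
    rw [jointProb, swapC,
      prod_prob_update n B Finset.univ ⟨k, b'⟩ (Finset.mem_univ _) x _ (e ⟨k, b⟩),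
      prod_prob_update n B _ ⟨k, b⟩ (Finset.mem_erase.mpr ⟨hne, Finset.mem_univ _⟩) x e
        (e ⟨k, b'⟩)]
    rw [jointProb,
      ← Finset.mul_prod_erase Finset.univ _ (Finset.mem_univ (⟨k, b⟩ : Slot B)),
      ← Finset.mul_prod_erase _ _
        (Finset.mem_erase.mpr ⟨hne.symm, Finset.mem_univ (⟨k, b'⟩ : Slot B)⟩)]
    rw [Finset.erase_right_comm]

end Aux5
section Aux6

variable {K : ℕ} (n B : Fin K → ℕ)

lemma chosen_swapC (k : Fin K) (b b' : Fin (B k)) (s₀ : Slot B) (hs₀ : s₀.1 ≠ k)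
    (e : Choice n B) :
    chosen n B (swapC n B k b b' e) ((Finset.univ.erase s₀).erase ⟨k, b⟩)
      = chosen n B e ((Finset.univ.erase s₀).erase ⟨k, b'⟩) := by
  by_cases hbb : b = b'
  · subst hbb; rw [swapC_self]
  · have hne : (⟨k, b⟩ : Slot B) ≠ ⟨k, b'⟩ := by simp [hbb]
    have hbs : (⟨k, b⟩ : Slot B) ≠ s₀ := fun h => hs₀ (by rw [← h])
    have hb's : (⟨k, b'⟩ : Slot B) ≠ s₀ := fun h => hs₀ (by rw [← h])
    have hmem : (⟨k, b'⟩ : Slot B) ∈ (Finset.univ.erase s₀).erase ⟨k, b⟩ :=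
      Finset.mem_erase.mpr ⟨hne.symm, Finset.mem_erase.mpr ⟨hb's, Finset.mem_univ _⟩⟩
    have hmem2 : (⟨k, b⟩ : Slot B) ∈ (Finset.univ.erase s₀).erase ⟨k, b'⟩ :=
      Finset.mem_erase.mpr ⟨hne, Finset.mem_erase.mpr ⟨hbs, Finset.mem_univ _⟩⟩
    rw [swapC, chosen_update_mem n B _ _ _ hmem]
    rw [chosen_congr n B (Function.update e ⟨k, b⟩ (e ⟨k, b'⟩)) e
      (((Finset.univ.erase s₀).erase ⟨k, b⟩).erase ⟨k, b'⟩)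
      (fun s hs => Function.update_of_ne
        (Finset.ne_of_mem_erase (Finset.mem_of_mem_erase hs)) _ _)]
    have hR : chosen n B e ((Finset.univ.erase s₀).erase ⟨k, b'⟩)
        = ((e ⟨k, b⟩).map fun m => (⟨k, m⟩ : Elem n)).toFinset ∪
          chosen n B e (((Finset.univ.erase s₀).erase ⟨k, b'⟩).erase ⟨k, b⟩) := by
      conv_lhs => rw [← Finset.insert_erase hmem2, chosen, Finset.biUnion_insert]
      rfl
    rw [hR, Finset.erase_right_comm]

lemma sum_swapC (k : Fin K) (b b' : Fin (B k)) (s₀ : Slot B) (hs₀ : s₀.1 ≠ k)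
    (W : Finset (Elem n) → ℝ) (x : Elem n → ℝ) :
    ∑ e : Choice n B,
        W (chosen n B e ((Finset.univ.erase s₀).erase ⟨k, b⟩)) * jointProb n B x e
      = ∑ e : Choice n B,
        W (chosen n B e ((Finset.univ.erase s₀).erase ⟨k, b'⟩)) * jointProb n B x e := by
  rw [← Function.Bijective.sum_comp (swapC_involutive n B k b b').bijective
    (fun e => W (chosen n B e ((Finset.univ.erase s₀).erase ⟨k, b⟩)) * jointProb n B x e)]
  exact Finset.sum_congr rfl fun e _ => by
    rw [chosen_swapC n B k b b' s₀ hs₀ e, jointProb_swapC]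

end Aux6
theorem multinoulliExtension_pderiv2_cross {K : ℕ} (n B : Fin K → ℕ) (hn : ∀ k, 1 ≤ n k)
    (hB : ∀ k, 0 < B k) (hBn : ∀ k, B k ≤ n k)
    (f : Finset (Elem n) → ℝ) (hf0 : ∀ S, 0 ≤ f S)
    (x : Elem n → ℝ) (hx : InSimplex n x)
    (k₁ k₂ : Fin K) (hk : k₁ ≠ k₂) (m₁ : Fin (n k₁)) (m₂ : Fin (n k₂)) :
    pderiv2 n (ME n B f) ⟨k₁, m₁⟩ ⟨k₂, m₂⟩ x =
      (B k₁ : ℝ) * (B k₂ : ℝ) * ∑ e : Choice n B,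
        (marg n f ⟨k₁, m₁⟩
            (insert ⟨k₂, m₂⟩ (chosen n B e
              ((Finset.univ.erase (⟨k₁, ⟨0, hB k₁⟩⟩ : Slot B)).erase
                (⟨k₂, ⟨0, hB k₂⟩⟩ : Slot B)))) -
          marg n f ⟨k₁, m₁⟩ (chosen n B e
            ((Finset.univ.erase (⟨k₁, ⟨0, hB k₁⟩⟩ : Slot B)).erase
              (⟨k₂, ⟨0, hB k₂⟩⟩ : Slot B)))) *
          jointProb n B x e := by
  classical
  set g1 : Choice n B → ℝ := fun e => f (chosen n B e Finset.univ) with hg1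
  set g2 : Choice n B → ℝ := fun e => ∑ b₂ : Fin (B k₂),
    (g1 (Function.update e ⟨k₂, b₂⟩ (some m₂)) - g1 (Function.update e ⟨k₂, b₂⟩ none))
    with hg2
  set W : Finset (Elem n) → ℝ := fun A =>
    marg n f ⟨k₁, m₁⟩ (insert ⟨k₂, m₂⟩ A) - marg n f ⟨k₁, m₁⟩ A with hW
  set z₁ : Fin (B k₁) := ⟨0, hB k₁⟩
  set z₂ : Fin (B k₂) := ⟨0, hB k₂⟩
  -- first derivative
  have h1 : ∀ y : Elem n → ℝ, pderiv n (ME n B f) ⟨k₂, m₂⟩ y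
      = ∑ e : Choice n B, g2 e * jointProb n B y e := by
    intro y
    have hME : ME n B f = fun y => ∑ e : Choice n B, g1 e * jointProb n B y e := rfl
    rw [hME, pderiv_sum_jointProb n B g1 k₂ m₂ y, Finset.sum_comm]
    exact Finset.sum_congr rfl fun e _ => (Finset.sum_mul _ _ _).symm
  -- second derivative
  have h2 : (fun y => pderiv n (ME n B f) ⟨k₂, m₂⟩ y)
      = fun y => ∑ e : Choice n B, g2 e * jointProb n B y e := funext h1
  show pderiv n (fun y => pderiv n (ME n B f) ⟨k₂, m₂⟩ y) ⟨k₁, m₁⟩ x = _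
  rw [h2, pderiv_sum_jointProb n B g2 k₁ m₁ x]
  -- identify each summand
  have hquad : ∀ (b₁ : Fin (B k₁)) (e : Choice n B),
      g2 (Function.update e ⟨k₁, b₁⟩ (some m₁)) - g2 (Function.update e ⟨k₁, b₁⟩ none)
        = ∑ b₂ : Fin (B k₂), W (chosen n B e
            ((Finset.univ.erase (⟨k₂, b₂⟩ : Slot B)).erase ⟨k₁, b₁⟩)) := by
    intro b₁ e
    rw [hg2]
    rw [← Finset.sum_sub_distrib]
    refine Finset.sum_congr rfl fun b₂ _ => ?_
    have hne : (⟨k₁, b₁⟩ : Slot B) ≠ ⟨k₂, b₂⟩ := by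
      intro h; exact hk (congrArg Sigma.fst h)
    have hc : ∀ (o₁ : Option (Fin (n k₁))) (o₂ : Option (Fin (n k₂))),
        chosen n B (Function.update (Function.update e ⟨k₁, b₁⟩ o₁) ⟨k₂, b₂⟩ o₂)
            Finset.univ
          = (o₂.map fun m => (⟨k₂, m⟩ : Elem n)).toFinset ∪
            ((o₁.map fun m => (⟨k₁, m⟩ : Elem n)).toFinset ∪
              chosen n B e ((Finset.univ.erase (⟨k₂, b₂⟩ : Slot B)).erase ⟨k₁, b₁⟩)) := by
      intro o₁ o₂
      rw [chosen_update_mem n B _ Finset.univ ⟨k₂, b₂⟩ (Finset.mem_univ _) o₂]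
      congr 1
      rw [chosen_update_mem n B e (Finset.univ.erase ⟨k₂, b₂⟩) ⟨k₁, b₁⟩
        (Finset.mem_erase.mpr ⟨hne, Finset.mem_univ _⟩) o₁]
    simp only [hg1, hc, Option.map_some, Option.map_none, Option.toFinset_some,
      Option.toFinset_none, Finset.empty_union, ← Finset.insert_eq, hW, marg]
    rw [Finset.insert_comm]
    ring
  calc ∑ b₁ : Fin (B k₁), ∑ e : Choice n B,
        (g2 (Function.update e ⟨k₁, b₁⟩ (some m₁)) -
          g2 (Function.update e ⟨k₁, b₁⟩ none)) * jointProb n B x e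
      = ∑ b₁ : Fin (B k₁), ∑ b₂ : Fin (B k₂), ∑ e : Choice n B,
          W (chosen n B e ((Finset.univ.erase (⟨k₂, b₂⟩ : Slot B)).erase ⟨k₁, b₁⟩)) *
            jointProb n B x e := by
        refine Finset.sum_congr rfl fun b₁ _ => ?_
        rw [Finset.sum_comm]
        refine Finset.sum_congr rfl fun e _ => ?_
        rw [hquad b₁ e, Finset.sum_mul]
    _ = ∑ b₁ : Fin (B k₁), ∑ b₂ : Fin (B k₂), ∑ e : Choice n B,
          W (chosen n B e ((Finset.univ.erase (⟨k₁, z₁⟩ : Slot B)).erase ⟨k₂, z₂⟩)) *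
            jointProb n B x e := by
        refine Finset.sum_congr rfl fun b₁ _ => Finset.sum_congr rfl fun b₂ _ => ?_
        calc ∑ e : Choice n B,
              W (chosen n B e ((Finset.univ.erase (⟨k₂, b₂⟩ : Slot B)).erase ⟨k₁, b₁⟩)) *
                jointProb n B x e
            = ∑ e : Choice n B,
              W (chosen n B e ((Finset.univ.erase (⟨k₂, b₂⟩ : Slot B)).erase ⟨k₁, z₁⟩)) *
                jointProb n B x e :=
              sum_swapC n B k₁ b₁ z₁ ⟨k₂, b₂⟩ (Ne.symm hk) W x
          _ = ∑ e : Choice n B,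
              W (chosen n B e ((Finset.univ.erase (⟨k₁, z₁⟩ : Slot B)).erase ⟨k₂, b₂⟩)) *
                jointProb n B x e := by
              refine Finset.sum_congr rfl fun e _ => ?_
              rw [Finset.erase_right_comm]
          _ = ∑ e : Choice n B,
              W (chosen n B e ((Finset.univ.erase (⟨k₁, z₁⟩ : Slot B)).erase ⟨k₂, z₂⟩)) *
                jointProb n B x e :=
              sum_swapC n B k₂ b₂ z₂ ⟨k₁, z₁⟩ hk W x
    _ = (B k₁ : ℝ) * (B k₂ : ℝ) * ∑ e : Choice n B,
          W (chosen n B e ((Finset.univ.erase (⟨k₁, z₁⟩ : Slot B)).erase ⟨k₂, z₂⟩)) *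
            jointProb n B x e := by
        rw [Finset.sum_const, Finset.sum_const, smul_smul, Finset.card_univ,
          Finset.card_univ, Fintype.card_fin, Fintype.card_fin, nsmul_eq_mul,
          Nat.cast_mul, mul_assoc]

end Multinoulli
end
end
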